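/- arXiv:1601.00193 — 4 statements merged into one kernel-verified Lean document; each statement's English description precedes it below -/
import Mathlib

section
/- Let Y be a Hilbert space, Y_h ⊂ Y a closed subspace, Z_h ⊂ Y a closed subspace, and P : Y → Z_h the orthogonal projection. Suppose δ ∈ (0,1) is such that ‖y - P y‖ ≤ δ‖y‖ for all y ∈ Y_h. Then for every y ∈ Y_h with y ≠ 0, ‖P y‖ ≥ √(1-δ²)·‖y‖; consequently inf_{y ∈ Y_h, y≠0} sup_{z ∈ Z_h, z≠0} ⟨y, z⟩/(‖y‖‖z‖) ≥ √(1-δ²). -/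
open scoped RealInnerProductSpace

theorem delta_proximal_inf_sup {Y : Type*}
    [NormedAddCommGroup Y] [InnerProductSpace ℝ Y] [CompleteSpace Y]
    (Yh Zh : Submodule ℝ Y) [CompleteSpace Zh] (δ : ℝ) (hδ0 : 0 < δ) (hδ1 : δ < 1)
    (hprox : ∀ y ∈ Yh, ‖y - (Submodule.orthogonalProjection Zh y : Y)‖ ≤ δ * ‖y‖) :
    (∀ y ∈ Yh, y ≠ 0 →
      Real.sqrt (1 - δ ^ 2) * ‖y‖ ≤ ‖(Submodule.orthogonalProjection Zh y : Y)‖) ∧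
    (∀ y ∈ Yh, y ≠ 0 → ∃ z ∈ Zh, z ≠ 0 ∧
      Real.sqrt (1 - δ ^ 2) * (‖y‖ * ‖z‖) ≤ ⟪y, z⟫) := by
  have key : ∀ y ∈ Yh, y ≠ 0 →
      Real.sqrt (1 - δ ^ 2) * ‖y‖ ≤ ‖(Submodule.orthogonalProjection Zh y : Y)‖ := by
    intro y hy hy0
    set P := (Submodule.orthogonalProjection Zh y : Y) with hP
    have hperp : ⟪y - P, P⟫ = 0 :=
      Zh.starProjection_inner_eq_zero y P (Submodule.orthogonalProjection Zh y).2
    have hpyth : ‖y‖ ^ 2 = ‖y - P‖ ^ 2 + ‖P‖ ^ 2 := by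
      have := norm_add_sq_real (y - P) P
      simpa [hperp] using this
    have h1 : (1 - δ ^ 2) * ‖y‖ ^ 2 ≤ ‖P‖ ^ 2 := by
      have hle : ‖y - P‖ ^ 2 ≤ δ ^ 2 * ‖y‖ ^ 2 := by
        have := hprox y hy
        nlinarith [norm_nonneg (y - P), norm_nonneg y]
      nlinarith
    have hs : Real.sqrt (1 - δ ^ 2) * ‖y‖ = Real.sqrt ((1 - δ ^ 2) * ‖y‖ ^ 2) := by
      rw [Real.sqrt_mul (by nlinarith), Real.sqrt_sq (norm_nonneg y)]
    rw [hs]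
    calc Real.sqrt ((1 - δ ^ 2) * ‖y‖ ^ 2) ≤ Real.sqrt (‖P‖ ^ 2) :=
          Real.sqrt_le_sqrt h1
      _ = ‖P‖ := Real.sqrt_sq (norm_nonneg P)
  refine ⟨key, fun y hy hy0 => ?_⟩
  set P := (Submodule.orthogonalProjection Zh y : Y) with hP
  have hPpos : 0 < ‖P‖ := by
    have := key y hy hy0
    have h1 : 0 < Real.sqrt (1 - δ ^ 2) := Real.sqrt_pos.2 (by nlinarith)
    have h2 : 0 < ‖y‖ := norm_pos_iff.2 hy0
    nlinarith
  refine ⟨P, (Submodule.orthogonalProjection Zh y).2, norm_pos_iff.1 hPpos, ?_⟩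
  have hperp : ⟪y - P, P⟫ = 0 :=
    Zh.starProjection_inner_eq_zero y P (Submodule.orthogonalProjection Zh y).2
  have hiner : ⟪y, P⟫ = ‖P‖ ^ 2 := by
    have : ⟪y - P, P⟫ = ⟪y, P⟫ - ⟪P, P⟫ := inner_sub_left _ _ _
    rw [this] at hperp
    have : ⟪P, P⟫ = ‖P‖ ^ 2 := real_inner_self_eq_norm_sq P
    linarith
  rw [hiner]
  have := key y hy hy0
  nlinarith
end

section
/- Let X, Y be Hilbert spaces and A : X → Y' a bijective linear isometry with adjoint A* : Y → X. Let X_h ⊂ X be a closed subspace, Z_h ⊂ Y a closed subspace, and P : Y → Z_h the Y-orthogonal projection. Assume δ ∈ (0,1) is such that ‖y - Py‖_Y ≤ δ‖y‖_Y for all y ∈ A^{-*}X_h. If u ∈ X solves Au = f and u_h ∈ X_h satisfies ⟨f - Au_h, v⟩ = 0 for all v in the test space P(A^{-*}X_h), then ‖u - u_h‖_X ≤ (1-δ)^{-1} · inf_{w ∈ X_h} ‖u - w‖_X. -/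
open scoped RealInnerProductSpace

theorem petrov_galerkin_quasi_optimality {X Y : Type*}
    [NormedAddCommGroup X] [InnerProductSpace ℝ X] [CompleteSpace X]
    [NormedAddCommGroup Y] [InnerProductSpace ℝ Y] [CompleteSpace Y]
    (A : X ≃ₗᵢ[ℝ] StrongDual ℝ Y) (Astar : Y →L[ℝ] X)
    (hAstar : ∀ (w : X) (y : Y), A w y = ⟪w, Astar y⟫)
    (hiso : ∀ y : Y, ‖Astar y‖ = ‖y‖)
    (Xh : Submodule ℝ X) (Zh : Submodule ℝ Y) [CompleteSpace Zh]
    (δ : ℝ) (hδ0 : 0 < δ) (hδ1 : δ < 1)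
    (hprox : ∀ y : Y, Astar y ∈ Xh →
      ‖y - (Zh.orthogonalProjectionOnto y : Y)‖ ≤ δ * ‖y‖)
    (u : X) (f : StrongDual ℝ Y) (hu : A u = f)
    (uh : X) (huh : uh ∈ Xh)
    (hPG : ∀ y : Y, Astar y ∈ Xh →
      (f - A uh) ((Zh.orthogonalProjectionOnto y : Y)) = 0) :
    ∀ w ∈ Xh, ‖u - uh‖ ≤ (1 - δ)⁻¹ * ‖u - w‖ := by
  -- A* is surjective
  have hsurj : Function.Surjective Astar := by
    set T : Y →ₗᵢ[ℝ] X := ⟨(Astar : Y →ₗ[ℝ] X), hiso⟩ with hT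
    have hclosed : IsClosed (Set.range Astar) := by
      have : Set.range Astar = Set.range T := rfl
      rw [this]
      exact T.isometry.isClosedEmbedding.isClosed_range
    set K : Submodule ℝ X := LinearMap.range (Astar : Y →ₗ[ℝ] X) with hK
    have hKset : (K : Set X) = Set.range Astar := by
      ext x; simp only [hK, SetLike.mem_coe, LinearMap.mem_range, Set.mem_range]; rfl
    haveI : CompleteSpace K := by
      have : IsClosed (K : Set X) := hKset ▸ hclosed
      exact this.completeSpace_coe
    have horth : Kᗮ = ⊥ := by
      rw [Submodule.eq_bot_iff]
      intro x hx
      have hx' : ∀ y : Y, ⟪Astar y, x⟫ = 0 := fun y => hx _ ⟨y, rfl⟩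
      have hAx : A x = 0 := by
        ext y
        have := hx' y
        rw [real_inner_comm] at this
        rw [← hAstar] at this
        simpa using this
      have := A.injective (by simpa using hAx)
      simpa using this
    have hKtop : K = ⊤ := Submodule.orthogonal_eq_bot_iff.mp horth
    intro x
    obtain ⟨y, hy⟩ := (hKtop ▸ Submodule.mem_top : x ∈ K)
    exact ⟨y, hy⟩
  -- PG orthogonality in inner-product form
  have hPG' : ∀ y : Y, Astar y ∈ Xh →
      ⟪u - uh, Astar ((Zh.orthogonalProjectionOnto y : Y))⟫ = 0 := by
    intro y hy
    have h0 := hPG y hy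
    rw [← hu] at h0
    have : A u ((Zh.orthogonalProjectionOnto y : Y)) - A uh ((Zh.orthogonalProjectionOnto y : Y)) = 0 := by
      simpa using h0
    rw [hAstar, hAstar] at this
    rw [inner_sub_left]
    linarith
  intro w hw
  have h1δ : (0:ℝ) < 1 - δ := by linarith
  -- Step 1 : ‖uh - w‖ ≤ (1-δ)⁻¹ ‖u - w‖
  obtain ⟨y, hy⟩ := hsurj (uh - w)
  have hyXh : Astar y ∈ Xh := hy ▸ Submodule.sub_mem Xh huh hw
  have hny : ‖y‖ = ‖uh - w‖ := by rw [← hiso y, hy]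
  set Py : Y := (Zh.orthogonalProjectionOnto y : Y) with hPy
  have key : ‖uh - w‖ ^ 2 = ⟪uh - w, Astar (y - Py)⟫ + ⟪u - w, Astar Py⟫ := by
    have h0 := hPG' y hyXh
    rw [← hPy] at h0
    rw [map_sub]
    rw [inner_sub_right]
    rw [hy]
    have e1 : (⟪u - w, Astar Py⟫ : ℝ) - ⟪uh - w, Astar Py⟫ = ⟪u - uh, Astar Py⟫ := by
      rw [← inner_sub_left]; congr 1; abel
    rw [real_inner_self_eq_norm_sq]
    linarith
  have bnd1 : ⟪uh - w, Astar (y - Py)⟫ ≤ ‖uh - w‖ * (δ * ‖uh - w‖) := by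
    calc ⟪uh - w, Astar (y - Py)⟫ ≤ ‖uh - w‖ * ‖Astar (y - Py)‖ := real_inner_le_norm _ _
    _ ≤ ‖uh - w‖ * (δ * ‖uh - w‖) := by
        apply mul_le_mul_of_nonneg_left _ (norm_nonneg _)
        rw [hiso]
        calc ‖y - Py‖ ≤ δ * ‖y‖ := hprox y hyXh
        _ = δ * ‖uh - w‖ := by rw [hny]
  have bnd2 : ⟪u - w, Astar Py⟫ ≤ ‖u - w‖ * ‖uh - w‖ := by
    calc ⟪u - w, Astar Py⟫ ≤ ‖u - w‖ * ‖Astar Py‖ := real_inner_le_norm _ _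
    _ ≤ ‖u - w‖ * ‖uh - w‖ := by
        apply mul_le_mul_of_nonneg_left _ (norm_nonneg _)
        rw [hiso, ← hny]
        calc ‖Py‖ ≤ ‖Zh.orthogonalProjectionOnto‖ * ‖y‖ := by
              exact (Zh.orthogonalProjectionOnto).le_opNorm y
        _ ≤ 1 * ‖y‖ := by
              exact mul_le_mul_of_nonneg_right (Submodule.orthogonalProjectionOnto_norm_le Zh) (norm_nonneg _)
        _ = ‖y‖ := one_mul _
  have step1 : ‖uh - w‖ ≤ (1 - δ)⁻¹ * ‖u - w‖ := by
    rcases eq_or_lt_of_le (norm_nonneg (uh - w)) with h0 | hpos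
    · rw [← h0]
      positivity
    · have hq : (1 - δ) * ‖uh - w‖ * ‖uh - w‖ ≤ ‖u - w‖ * ‖uh - w‖ := by
        nlinarith [key, bnd1, bnd2]
      have := le_of_mul_le_mul_right hq hpos
      rw [le_inv_mul_iff₀ h1δ]
      linarith
  -- Step 2
  obtain ⟨z, hz⟩ := hsurj (w - uh)
  have hzXh : Astar z ∈ Xh := hz ▸ Submodule.sub_mem Xh hw huh
  have hnz : ‖z‖ = ‖uh - w‖ := by rw [← hiso z, hz, norm_sub_rev]
  set Pz : Y := (Zh.orthogonalProjectionOnto z : Y) with hPz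
  have key2 : ‖u - uh‖ ^ 2 = ⟪u - uh, u - w⟫ + ⟪u - uh, Astar (z - Pz)⟫ := by
    have h0 := hPG' z hzXh
    rw [← hPz] at h0
    have e1 : (⟪u - uh, u - uh⟫ : ℝ) = ⟪u - uh, u - w⟫ + ⟪u - uh, w - uh⟫ := by
      rw [← inner_add_right]; congr 1; abel
    have e2 : (⟪u - uh, Astar z⟫ : ℝ) = ⟪u - uh, w - uh⟫ := by rw [hz]
    have e3 : (⟪u - uh, Astar (z - Pz)⟫ : ℝ) = ⟪u - uh, Astar z⟫ - ⟪u - uh, Astar Pz⟫ := by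
      rw [map_sub, inner_sub_right]
    rw [← real_inner_self_eq_norm_sq]
    linarith
  have bnd3 : ⟪u - uh, u - w⟫ ≤ ‖u - uh‖ * ‖u - w‖ := real_inner_le_norm _ _
  have bnd4 : ⟪u - uh, Astar (z - Pz)⟫ ≤ ‖u - uh‖ * (δ * ‖uh - w‖) := by
    calc ⟪u - uh, Astar (z - Pz)⟫ ≤ ‖u - uh‖ * ‖Astar (z - Pz)‖ := real_inner_le_norm _ _
    _ ≤ ‖u - uh‖ * (δ * ‖uh - w‖) := by
        apply mul_le_mul_of_nonneg_left _ (norm_nonneg _)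
        rw [hiso]
        calc ‖z - Pz‖ ≤ δ * ‖z‖ := hprox z hzXh
        _ = δ * ‖uh - w‖ := by rw [hnz]
  rcases eq_or_lt_of_le (norm_nonneg (u - uh)) with h0 | hpos
  · rw [← h0]
    positivity
  · have hfinal : ‖u - uh‖ * ‖u - uh‖ ≤ ((1 - δ)⁻¹ * ‖u - w‖) * ‖u - uh‖ := by
      have h1 : ‖u - uh‖ * (δ * ‖uh - w‖) ≤ ‖u - uh‖ * (δ * ((1 - δ)⁻¹ * ‖u - w‖)) :=
        mul_le_mul_of_nonneg_left (mul_le_mul_of_nonneg_left step1 hδ0.le) (norm_nonneg _)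
      have h2 : ‖u - uh‖ ^ 2 = ‖u - uh‖ * ‖u - uh‖ := by ring
      have h3 : ‖u - uh‖ * ‖u - w‖ + ‖u - uh‖ * (δ * ((1 - δ)⁻¹ * ‖u - w‖))
          = ((1 - δ)⁻¹ * ‖u - w‖) * ‖u - uh‖ := by
        field_simp
        ring
      linarith [key2, bnd3, bnd4]
    exact le_of_mul_le_mul_right hfinal hpos
end

section
/- Under the assumptions of the δ-proximal Petrov–Galerkin setting, the Uzawa iteration contracts with factor δ: if u_h is the solution component of the saddle point problem and u_h^{k+1} is obtained from u_h^k by one Uzawa step (solving (A*r_h^k, A*z)_X = (f - Au_h^k)(z) for r_h^k ∈ Z_h, then updating (u_h^{k+1}, v)_X = (u_h^k, v)_X + (A*r_h^k, v)_X for v ∈ X_h), then ‖u_h - u_h^{k+1}‖_X ≤ δ·‖u_h - u_h^k‖_X. -/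
open scoped RealInnerProductSpace

theorem uzawa_contraction {X Y : Type*}
    [NormedAddCommGroup X] [InnerProductSpace ℝ X] [CompleteSpace X]
    [NormedAddCommGroup Y] [InnerProductSpace ℝ Y] [CompleteSpace Y]
    (A : X ≃ₗᵢ[ℝ] StrongDual ℝ Y) (Astar : Y →L[ℝ] X)
    (hAstar : ∀ (w : X) (y : Y), A w y = ⟪w, Astar y⟫)
    (hiso : ∀ y : Y, ‖Astar y‖ = ‖y‖)
    (Xh : Submodule ℝ X) (Zh : Submodule ℝ Y) [CompleteSpace Zh]
    (δ : ℝ) (hδ0 : 0 < δ) (hδ1 : δ < 1)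
    (hprox : ∀ y : Y, Astar y ∈ Xh →
      ‖y - (Zh.orthogonalProjectionOnto y : Y)‖ ≤ δ * ‖y‖)
    (f : StrongDual ℝ Y)
    -- the saddle point solution (u_h, r_h)
    (uh : X) (huh : uh ∈ Xh) (rh : Y) (hrh : rh ∈ Zh)
    (hsaddle1 : ∀ z ∈ Zh, ⟪Astar rh, Astar z⟫ + A uh z = f z)
    (hsaddle2 : ∀ v ∈ Xh, A v rh = 0)
    -- one Uzawa step from u_h^k to u_h^{k+1}
    (uhk : X) (huhk : uhk ∈ Xh) (rhk : Y) (hrhk : rhk ∈ Zh)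
    (hstep1 : ∀ z ∈ Zh, ⟪Astar rhk, Astar z⟫ = (f - A uhk) z)
    (uhk1 : X) (huhk1 : uhk1 ∈ Xh)
    (hstep2 : ∀ v ∈ Xh, ⟪uhk1, v⟫ = ⟪uhk, v⟫ + ⟪Astar rhk, v⟫) :
    ‖uh - uhk1‖ ≤ δ * ‖uh - uhk‖ := by
  -- Astar as a linear isometry
  set li : Y →ₗᵢ[ℝ] X := ⟨Astar.toLinearMap, hiso⟩ with hli
  have hli_apply : ∀ y : Y, li y = Astar y := fun _ => rfl
  have hinner : ∀ a b : Y, ⟪Astar a, Astar b⟫ = ⟪a, b⟫ := by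
    intro a b
    have := li.inner_map_map a b
    simpa [hli_apply] using this
  -- Astar is surjective
  have hsurj : Function.Surjective Astar := by
    set K : Submodule ℝ X := LinearMap.range (Astar : Y →ₗ[ℝ] X) with hK
    have hcomp : IsComplete (Set.range Astar) :=
      li.isometry.isUniformInducing.isComplete_range
    have hcompK : IsComplete (K : Set X) := by
      have : (K : Set X) = Set.range Astar := by
        ext x; simp [hK, LinearMap.mem_range]
      rw [this]; exact hcomp
    haveI : CompleteSpace K := hcompK.completeSpace_coe
    have hbot : Kᗮ = ⊥ := by
      rw [Submodule.eq_bot_iff]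
      intro x hx
      have hx0 : ∀ y : Y, ⟪Astar y, x⟫ = 0 := fun y =>
        hx (Astar y) ⟨y, rfl⟩
      have hAx : A x = 0 := by
        ext y
        have := hx0 y
        rw [real_inner_comm] at this
        simp [hAstar x y, this]
      apply A.injective
      simp [hAx]
    have hKtop : K = ⊤ := Submodule.orthogonal_eq_bot_iff.mp hbot
    intro x
    have : x ∈ K := hKtop ▸ Submodule.mem_top
    obtain ⟨y, hy⟩ := this
    exact ⟨y, hy⟩
  obtain ⟨yk, hyk⟩ := hsurj (uh - uhk)
  set e : X := uh - uhk with he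
  set e1 : X := uh - uhk1 with he1
  have he1mem : e1 ∈ Xh := Submodule.sub_mem _ huh huhk1
  set r : Y := rhk - rh with hr
  have hrmem : r ∈ Zh := Submodule.sub_mem _ hrhk hrh
  -- key orthogonality: ⟪yk - r, z⟫ = 0 for z ∈ Zh
  have hkey : ∀ z ∈ Zh, ⟪yk - r, z⟫ = 0 := by
    intro z hz
    have h1 := hsaddle1 z hz
    have h2 := hstep1 z hz
    have h3 : ⟪yk, z⟫ = ⟪Astar yk, Astar z⟫ := (hinner yk z).symm
    rw [hyk] at h3
    have h4 : ⟪uh - uhk, Astar z⟫ = A uh z - A uhk z := by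
      rw [inner_sub_left, ← hAstar, ← hAstar]
    have h5 : ⟪r, z⟫ = ⟪Astar rhk, Astar z⟫ - ⟪Astar rh, Astar z⟫ := by
      rw [← hinner r z, hr, map_sub, inner_sub_left]
    simp only [ContinuousLinearMap.sub_apply] at h2
    rw [inner_sub_left, h3, h4, h5]
    linarith
  have hproj : (Zh.orthogonalProjectionOnto yk : Y) = r :=
    Submodule.eq_starProjection_of_mem_of_inner_eq_zero hrmem hkey
  -- error identity on Xh
  have herr : ∀ v ∈ Xh, ⟪e1, v⟫ = ⟪Astar (yk - r), v⟫ := by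
    intro v hv
    have h0 : ⟪Astar rh, v⟫ = 0 := by
      have := hsaddle2 v hv
      rw [hAstar v rh, real_inner_comm] at this
      exact this
    have h2 := hstep2 v hv
    have : ⟪Astar (yk - r), v⟫ = ⟪Astar yk, v⟫ - ⟪Astar rhk, v⟫ + ⟪Astar rh, v⟫ := by
      rw [map_sub, hr, map_sub, inner_sub_left, inner_sub_left]; ring
    rw [this, h0, hyk, he1, inner_sub_left, h2, inner_sub_left]
    ring
  -- norm estimates
  have hnyk : ‖yk‖ = ‖e‖ := by rw [← hiso yk, hyk]
  have hAmem : Astar yk ∈ Xh := by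
    rw [hyk]; exact Submodule.sub_mem _ huh huhk
  have hproxk : ‖yk - r‖ ≤ δ * ‖yk‖ := by
    have := hprox yk hAmem
    rwa [hproj] at this
  have hsq : ‖e1‖ ^ 2 ≤ δ * ‖e‖ * ‖e1‖ := by
    have h1 : ‖e1‖ ^ 2 = ⟪e1, e1⟫ := by
      rw [real_inner_self_eq_norm_sq]
    rw [h1, herr e1 he1mem]
    calc ⟪Astar (yk - r), e1⟫ ≤ ‖Astar (yk - r)‖ * ‖e1‖ := real_inner_le_norm _ _
      _ = ‖yk - r‖ * ‖e1‖ := by rw [hiso]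
      _ ≤ δ * ‖yk‖ * ‖e1‖ := by
          apply mul_le_mul_of_nonneg_right hproxk (norm_nonneg _)
      _ = δ * ‖e‖ * ‖e1‖ := by rw [hnyk]
  rcases eq_or_lt_of_le (norm_nonneg e1) with h | h
  · rw [← h]
    positivity
  · nlinarith [hsq, h]
end

section
/- Let X, Y be Hilbert spaces, A : X → Y' a bijective isometry with ‖v‖_Y = ‖A*v‖_X, and suppose Z_h ⊂ Y is δ-proximal for a subspace containing v_h and A^{-1}f_h, with δ ∈ (0,1). Define the lifted residual r_h ∈ Z_h by (A*r_h, A*z)_X = ⟨f_h - Av_h, z⟩ for all z ∈ Z_h. Then (1-δ)·‖f_h - Av_h‖_{Y'} ≤ ‖r_h‖_Y ≤ ‖f_h - Av_h‖_{Y'}. -/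
open scoped RealInnerProductSpace

theorem lifted_residual_estimator {X Y : Type*}
    [NormedAddCommGroup X] [InnerProductSpace ℝ X] [CompleteSpace X]
    [NormedAddCommGroup Y] [InnerProductSpace ℝ Y] [CompleteSpace Y]
    (A : X ≃ₗᵢ[ℝ] StrongDual ℝ Y) (Astar : Y →L[ℝ] X)
    (hAstar : ∀ (w : X) (y : Y), A w y = ⟪w, Astar y⟫)
    (hiso : ∀ y : Y, ‖Astar y‖ = ‖y‖)
    (W : Submodule ℝ X) (Zh : Submodule ℝ Y) [CompleteSpace Zh]
    (δ : ℝ) (hδ0 : 0 < δ) (hδ1 : δ < 1)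
    (hprox : ∀ y : Y, Astar y ∈ W →
      ‖y - (Zh.orthogonalProjectionOnto y : Y)‖ ≤ δ * ‖y‖)
    (vh : X) (fh : StrongDual ℝ Y)
    (hvh : vh ∈ W) (hfh : A.symm fh ∈ W)
    (rh : Y) (hrh : rh ∈ Zh)
    (hlift : ∀ z ∈ Zh, ⟪Astar rh, Astar z⟫ = (fh - A vh) z) :
    (1 - δ) * ‖fh - A vh‖ ≤ ‖rh‖ ∧ ‖rh‖ ≤ ‖fh - A vh‖ := by
  -- Astar as a linear isometry
  set li : Y →ₗᵢ[ℝ] X := ⟨Astar.toLinearMap, hiso⟩ with hli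
  have hinner : ∀ a b : Y, ⟪Astar a, Astar b⟫ = ⟪a, b⟫ := fun a b =>
    li.inner_map_map a b
  -- key : A ∘ Astar = toDual
  have key : ∀ y : Y, A (Astar y) = InnerProductSpace.toDual ℝ Y y := by
    intro y
    ext z
    rw [hAstar, hinner, InnerProductSpace.toDual_apply_apply]
  set e : X := A.symm fh - vh with he
  have heW : e ∈ W := W.sub_mem hfh hvh
  set r : Y := (InnerProductSpace.toDual ℝ Y).symm (A e) with hr
  have hAr : Astar r = e := by
    apply A.injective
    rw [key r, hr, LinearIsometryEquiv.apply_symm_apply]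
  have hAe : A e = fh - A vh := by
    rw [he, map_sub, A.apply_symm_apply]
  have hnorm : ‖fh - A vh‖ = ‖r‖ := by
    rw [← hAe, ← hAr, key r]
    exact (InnerProductSpace.toDual ℝ Y).norm_map r
  -- rh is the orthogonal projection of r onto Zh
  have hproj : (Zh.orthogonalProjectionOnto r : Y) = rh := by
    apply Submodule.eq_starProjection_of_mem_of_inner_eq_zero hrh
    intro w hw
    have h1 := hlift w hw
    rw [hinner] at h1
    have h2 : (fh - A vh) w = ⟪r, w⟫ := by
      rw [← hAe, hAstar, ← hAr, hinner]
    rw [inner_sub_left, h1, h2, sub_self]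
  constructor
  · -- lower bound
    have hW : Astar r ∈ W := hAr ▸ heW
    have hp := hprox r hW
    rw [hproj] at hp
    have : ‖r‖ ≤ ‖rh‖ + δ * ‖r‖ := by
      calc ‖r‖ = ‖rh + (r - rh)‖ := by congr 1; abel
        _ ≤ ‖rh‖ + ‖r - rh‖ := norm_add_le _ _
        _ ≤ ‖rh‖ + δ * ‖r‖ := by linarith
    rw [hnorm]; nlinarith
  · -- upper bound
    rw [hnorm, ← hproj]
    have h0 : ⟪r - (Zh.orthogonalProjectionOnto r : Y), (Zh.orthogonalProjectionOnto r : Y)⟫ = 0 :=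
      Submodule.starProjection_inner_eq_zero r _ (Zh.orthogonalProjectionOnto r).2
    have := norm_add_sq_real ((Zh.orthogonalProjectionOnto r : Y)) (r - Zh.orthogonalProjectionOnto r)
    rw [add_sub_cancel] at this
    have hz : ⟪(Zh.orthogonalProjectionOnto r : Y), r - (Zh.orthogonalProjectionOnto r : Y)⟫ = 0 := by
      rw [real_inner_comm]; exact h0
    rw [hz] at this
    nlinarith [norm_nonneg (r - (Zh.orthogonalProjectionOnto r : Y)),
      norm_nonneg ((Zh.orthogonalProjectionOnto r : Y)), norm_nonneg r]
end
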